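/- Let K be a number field of degree 6 over ℚ and let ρ : K → K be a ℚ-algebra automorphism such that for every field embedding φ : K → ℂ and every x ∈ K one has φ(ρ(x)) = the complex conjugate of φ(x). Let p be a rational prime and let π ∈ O_K satisfy π·ρ(π) = p and ℚ(π) = K. Then the index of the subring ℤ[π] in the subring ℤ[π, ρ(π)] (as additive subgroups of O_K) is finite and is a power of p. -/

import Mathlib

/-- For a sextic CM-field `K` with complex conjugation `ρ` and
`π ∈ O_K` with `π·ρ(π) = p` and `ℚ(π) = K`, the index of `ℤ[π]` in `ℤ[π, ρ(π)]`
(as additive subgroups) is finite and is a power of `p`. -/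
theorem index_zpi_in_zpipibar_is_p_power
    {K : Type*} [Field K] [NumberField K]
    (hdeg : Module.finrank ℚ K = 6)
    (ρ : K ≃ₐ[ℚ] K)
    (hρ : ∀ (φ : K →+* ℂ) (x : K), φ (ρ x) = starRingEnd ℂ (φ x))
    (p : ℕ) (hp : p.Prime)
    (π : K) (hπ : IsIntegral ℤ π)
    (hnorm : π * ρ π = (p : K))
    (hgen : Algebra.adjoin ℚ {π} = ⊤) :
    (Subring.closure {π}).toAddSubgroup.relIndex
        (Subring.closure {π, ρ π}).toAddSubgroup ≠ 0 ∧
      ∃ m : ℕ,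
        (Subring.closure {π}).toAddSubgroup.relIndex
            (Subring.closure {π, ρ π}).toAddSubgroup = p ^ m := by
  classical
  set R := Subring.closure ({π} : Set K) with hRdef
  set S := Subring.closure ({π, ρ π} : Set K) with hSdef
  have hπmem : π ∈ R := Subring.subset_closure rfl
  have hπS : π ∈ S := Subring.subset_closure (Or.inl rfl)
  have hρπS : ρ π ∈ S := Subring.subset_closure (Or.inr rfl)
  -- ρ π is integral over ℤ
  have hπ' : IsIntegral ℤ (ρ π) := by
    have := hπ.map (ρ.toAlgHom.restrictScalars ℤ)
    simpa using this
  -- pointwise: every element of S becomes an element of R after multiplying by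
  -- a power of π
  have key : ∀ x ∈ S, ∃ n : ℕ, π ^ n * x ∈ R := by
    intro x hx
    induction hx using Subring.closure_induction with
    | mem y hy =>
        rcases hy with rfl | rfl
        · exact ⟨0, by simpa using hπmem⟩
        · refine ⟨1, ?_⟩
          rw [pow_one, hnorm]
          exact natCast_mem R p
    | zero => exact ⟨0, by simpa using R.zero_mem⟩
    | one => exact ⟨0, by simpa using R.one_mem⟩
    | add a b ha hb iha ihb =>
        obtain ⟨n, hn⟩ := iha
        obtain ⟨m, hm⟩ := ihb
        refine ⟨n + m, ?_⟩
        have : π ^ (n + m) * (a + b) = π ^ m * (π ^ n * a) + π ^ n * (π ^ m * b) := by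
          ring
        rw [this]
        exact R.add_mem (R.mul_mem (R.pow_mem hπmem m) hn) (R.mul_mem (R.pow_mem hπmem n) hm)
    | neg a ha iha =>
        obtain ⟨n, hn⟩ := iha
        exact ⟨n, by rw [mul_neg]; exact R.neg_mem hn⟩
    | mul a b ha hb iha ihb =>
        obtain ⟨n, hn⟩ := iha
        obtain ⟨m, hm⟩ := ihb
        refine ⟨n + m, ?_⟩
        have : π ^ (n + m) * (a * b) = (π ^ n * a) * (π ^ m * b) := by ring
        rw [this]
        exact R.mul_mem hn hm
  -- S is a finitely generated ℤ-module
  have hfg : (Algebra.adjoin ℤ ({π, ρ π} : Set K)).toSubmodule.FG := by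
    refine fg_adjoin_of_finite ((Set.finite_singleton _).insert _) ?_
    rintro x (rfl | rfl)
    · exact hπ
    · exact hπ'
  have hadj : (Algebra.adjoin ℤ ({π, ρ π} : Set K)).toSubmodule = S.toAddSubgroup.toIntSubmodule := by
    rw [Algebra.adjoin_int]
    rfl
  obtain ⟨t, ht⟩ := hfg
  rw [hadj] at ht
  -- uniform bound N with π ^ N * S ⊆ R
  have htS : ∀ g ∈ t, ∃ n : ℕ, π ^ n * g ∈ R := by
    intro g hg
    have : g ∈ S := by
      have : g ∈ Submodule.span ℤ (t : Set K) := Submodule.subset_span hg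
      rw [ht] at this
      exact this
    exact key g this
  choose f hf using htS
  set N := t.attach.sup fun g => f g.1 g.2 with hN
  have hNall : ∀ x ∈ S, π ^ N * x ∈ R := by
    intro x hx
    have hx' : x ∈ Submodule.span ℤ (t : Set K) := by
      rw [ht]; exact hx
    clear hx
    induction hx' using Submodule.span_induction with
    | mem g hg =>
        have hle : f g hg ≤ N :=
          Finset.le_sup (f := fun g : {x // x ∈ t} => f g.1 g.2) (Finset.mem_attach t ⟨g, hg⟩)
        have : π ^ N * g = π ^ (N - f g hg) * (π ^ (f g hg) * g) := by
          rw [← mul_assoc, ← pow_add, Nat.sub_add_cancel hle]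
        rw [this]
        exact R.mul_mem (R.pow_mem hπmem _) (hf g hg)
    | zero => simpa using R.zero_mem
    | add a b ha hb iha ihb =>
        rw [mul_add]; exact R.add_mem iha ihb
    | smul c a ha iha =>
        rw [zsmul_eq_mul, mul_left_comm]
        exact R.mul_mem (intCast_mem R c) iha
  -- hence p ^ N kills S modulo R
  have hpN : ∀ x ∈ S, (p : K) ^ N * x ∈ R := by
    intro x hx
    have h1 : (p : K) ^ N * x = π ^ N * ((ρ π) ^ N * x) := by
      rw [← hnorm, mul_pow]; ring
    rw [h1]
    exact hNall _ (S.mul_mem (S.pow_mem hρπS N) hx)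
  have hRS : R ≤ S := Subring.closure_mono (by intro x hx; exact Or.inl hx)
  -- the quotient group
  set H := R.toAddSubgroup.addSubgroupOf S.toAddSubgroup with hHdef
  have hkill : ∀ q : (↥S.toAddSubgroup) ⧸ H, (p ^ N) • q = 0 := by
    intro q
    induction q using QuotientAddGroup.induction_on with
    | H x =>
        have h2 : ((p ^ N) • ((x : (↥S.toAddSubgroup) ⧸ H))) =
            ((((p ^ N) • x : ↥S.toAddSubgroup) : (↥S.toAddSubgroup) ⧸ H)) := by
          exact (map_nsmul (QuotientAddGroup.mk' H) (p ^ N) x).symm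
        rw [h2, QuotientAddGroup.eq_zero_iff, AddSubgroup.mem_addSubgroupOf]
        have h3 : (((p ^ N • x : ↥S.toAddSubgroup) : K)) = (p : K) ^ N * (x : K) := by
          push_cast
          rw [nsmul_eq_mul]
          push_cast
          ring
        show (((p ^ N • x : ↥S.toAddSubgroup) : K)) ∈ R
        rw [h3]
        exact hpN _ x.2
  have hpNpos : 0 < p ^ N := pow_pos hp.pos N
  -- the quotient is a finitely generated torsion group, hence finite
  haveI hfgS : AddGroup.FG ↥S.toAddSubgroup := by
    rw [AddGroup.fg_iff_addSubgroup_fg]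
    refine ⟨t, ?_⟩
    rw [← Submodule.span_int_eq_addSubgroupClosure, ht,
      AddSubgroup.toIntSubmodule_toAddSubgroup]
  haveI : AddGroup.FG ((↥S.toAddSubgroup) ⧸ H) := AddGroup.fg_of_surjective
    (f := QuotientAddGroup.mk' H) (QuotientAddGroup.mk'_surjective H)
  have htor : AddMonoid.IsTorsion ((↥S.toAddSubgroup) ⧸ H) := by
    intro q
    exact isOfFinAddOrder_iff_nsmul_eq_zero.mpr ⟨p ^ N, hpNpos, hkill q⟩
  haveI hfin : Finite ((↥S.toAddSubgroup) ⧸ H) := AddCommGroup.finite_of_fg_torsion _ htor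
  -- identify the relindex with the cardinality of the quotient
  have hidx : R.toAddSubgroup.relIndex S.toAddSubgroup = Nat.card ((↥S.toAddSubgroup) ⧸ H) := rfl
  constructor
  · rw [hidx]
    exact Nat.card_ne_zero.mpr ⟨⟨0⟩, hfin⟩
  · -- the quotient is a p-group
    haveI : Fact p.Prime := ⟨hp⟩
    have hPG : IsPGroup p (Multiplicative ((↥S.toAddSubgroup) ⧸ H)) := by
      intro g
      refine ⟨N, ?_⟩
      have h4 := hkill g.toAdd
      apply Multiplicative.toAdd.injective
      rw [toAdd_pow, toAdd_one]
      exact h4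
    obtain ⟨n, hn⟩ := (IsPGroup.iff_card).mp hPG
    refine ⟨n, ?_⟩
    rw [hidx, ← Nat.card_congr (Multiplicative.toAdd (α := (↥S.toAddSubgroup) ⧸ H)), hn]
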